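/- Let (S_G, M_G) be a quantum graph on M_n(ℂ) and (S_H, M_H) a quantum graph on M_m(ℂ). Set M_K = M_G ⊗ M_H (the unital star-subalgebra of M_{nm}(ℂ) spanned by Kronecker products of elements of M_G and M_H) and S_K = S_G ⊗ S_H (categorical product). Then (S_K, M_K) is a quantum graph on M_{nm}(ℂ): S_K is a ℂ-linear subspace closed under conjugate transpose, A X B ∈ S_K for all A, B in the commutant M_K' of M_K in M_{nm}(ℂ) and all X ∈ S_K, and Tr(X Aᴴ) = 0 for all X ∈ S_K and A ∈ M_K'. -/

import Mathlib

open Matrix Kronecker BigOperators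

noncomputable section

/-- The commutant of a set of matrices in `M_I(ℂ)`. -/
def commutant {I : Type*} [Fintype I] (M : Set (Matrix I I ℂ)) : Set (Matrix I I ℂ) :=
  {Y | ∀ A ∈ M, Y * A = A * Y}

/-- The ℂ-linear span of Kronecker products `v ⊗ₖ w` with `v ∈ V`, `w ∈ W`. -/
def tensorSpan {I J : Type*} [Fintype I] [Fintype J]
    (V : Set (Matrix I I ℂ)) (W : Set (Matrix J J ℂ)) :
    Submodule ℂ (Matrix (I × J) (I × J) ℂ) :=
  Submodule.span ℂ {x | ∃ v ∈ V, ∃ w ∈ W, x = v ⊗ₖ w}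

/-- A pair `(S, M)` is a quantum graph: `S` is closed under conjugate transpose, is a
bimodule over the commutant of `M`, and is trace-orthogonal to the commutant of `M`. -/
def IsQuantumGraph {I : Type*} [Fintype I]
    (S : Submodule ℂ (Matrix I I ℂ)) (M : Set (Matrix I I ℂ)) : Prop :=
  (∀ X ∈ S, Xᴴ ∈ S) ∧
  (∀ A ∈ commutant M, ∀ B ∈ commutant M, ∀ X ∈ S, A * X * B ∈ S) ∧
  (∀ X ∈ S, ∀ A ∈ commutant M, Matrix.trace (X * Aᴴ) = 0)

/-- Product of the matrices `P a`, `a ∈ T`, taken in increasing order of indices. -/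
def finsetProd {β : Type*} [Monoid β] {c : ℕ} (P : Fin c → β) (T : Finset (Fin c)) : β :=
  ((T.sort (· ≤ ·)).map P).prod

/-- A quantum `c`-coloring of `(S, M)` (with auxiliary algebra `M_k(ℂ)`). -/
def IsQColoring {I : Type*} [Fintype I] [DecidableEq I] {c k : ℕ}
    (S : Submodule ℂ (Matrix I I ℂ)) (M : Set (Matrix I I ℂ))
    (P : Fin c → Matrix (I × Fin k) (I × Fin k) ℂ) : Prop :=
  (∀ a, P a ∈ tensorSpan M (Set.univ : Set (Matrix (Fin k) (Fin k) ℂ))) ∧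
  (∀ a, (P a)ᴴ = P a) ∧
  (∀ a, P a * P a = P a) ∧
  ((∑ a, P a) = 1) ∧
  (∀ X ∈ S, ∀ a, P a * (X ⊗ₖ (1 : Matrix (Fin k) (Fin k) ℂ)) * P a = 0)

def HasQColoring {I : Type*} [Fintype I] [DecidableEq I]
    (S : Submodule ℂ (Matrix I I ℂ)) (M : Set (Matrix I I ℂ)) (c : ℕ) : Prop :=
  ∃ k : ℕ, 1 ≤ k ∧ ∃ P : Fin c → Matrix (I × Fin k) (I × Fin k) ℂ, IsQColoring S M P

/-- The quantum chromatic number `χ_q(S, M) ∈ ℕ∞`. -/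
def qChrom {I : Type*} [Fintype I] [DecidableEq I]
    (S : Submodule ℂ (Matrix I I ℂ)) (M : Set (Matrix I I ℂ)) : ℕ∞ :=
  ⨅ (c : ℕ) (_ : HasQColoring S M c), (c : ℕ∞)

/-- A quantum `b`-fold coloring of `(S, M)` using `c` colors
(with auxiliary algebra `M_k(ℂ)`). -/
def IsQBFoldColoring {I : Type*} [Fintype I] [DecidableEq I] {c k : ℕ}
    (S : Submodule ℂ (Matrix I I ℂ)) (M : Set (Matrix I I ℂ)) (b : ℕ)
    (P : Fin c → Matrix (I × Fin k) (I × Fin k) ℂ) : Prop :=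
  (∀ a, P a ∈ tensorSpan M (Set.univ : Set (Matrix (Fin k) (Fin k) ℂ))) ∧
  (∀ a a', P a * P a' = P a' * P a) ∧
  (∀ a, (P a)ᴴ = P a) ∧
  (∀ a, P a * P a = P a) ∧
  ((∑ T ∈ Finset.univ.powersetCard b, finsetProd P T) = 1) ∧
  (∀ X ∈ S, ∀ a, P a * (X ⊗ₖ (1 : Matrix (Fin k) (Fin k) ℂ)) * P a = 0)

def HasQBFoldColoring {I : Type*} [Fintype I] [DecidableEq I]
    (S : Submodule ℂ (Matrix I I ℂ)) (M : Set (Matrix I I ℂ)) (b c : ℕ) : Prop :=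
  ∃ k : ℕ, 1 ≤ k ∧ ∃ P : Fin c → Matrix (I × Fin k) (I × Fin k) ℂ, IsQBFoldColoring S M b P

/-- The quantum `b`-fold chromatic number `χ_{b,q}(S, M) ∈ ℕ∞`. -/
def qbChrom {I : Type*} [Fintype I] [DecidableEq I]
    (S : Submodule ℂ (Matrix I I ℂ)) (M : Set (Matrix I I ℂ)) (b : ℕ) : ℕ∞ :=
  ⨅ (c : ℕ) (_ : HasQBFoldColoring S M b c), (c : ℕ∞)

/-- A local `b`-fold coloring of `(S, M)` using `c` colors (projections in `M` itself). -/
def IsLocalBFoldColoring {I : Type*} [Fintype I] [DecidableEq I] {c : ℕ}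
    (S : Submodule ℂ (Matrix I I ℂ)) (M : Set (Matrix I I ℂ)) (b : ℕ)
    (P : Fin c → Matrix I I ℂ) : Prop :=
  (∀ a, P a ∈ M) ∧
  (∀ a a', P a * P a' = P a' * P a) ∧
  (∀ a, (P a)ᴴ = P a) ∧
  (∀ a, P a * P a = P a) ∧
  ((∑ T ∈ Finset.univ.powersetCard b, finsetProd P T) = 1) ∧
  (∀ X ∈ S, ∀ a, P a * X * P a = 0)

def HasLocalBFoldColoring {I : Type*} [Fintype I] [DecidableEq I]
    (S : Submodule ℂ (Matrix I I ℂ)) (M : Set (Matrix I I ℂ)) (b c : ℕ) : Prop :=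
  ∃ P : Fin c → Matrix I I ℂ, IsLocalBFoldColoring S M b P

/-- The local `b`-fold chromatic number. -/
def localBChrom {I : Type*} [Fintype I] [DecidableEq I]
    (S : Submodule ℂ (Matrix I I ℂ)) (M : Set (Matrix I I ℂ)) (b : ℕ) : ℕ∞ :=
  ⨅ (c : ℕ) (_ : HasLocalBFoldColoring S M b c), (c : ℕ∞)

/-- `S_G`: span of matrix units on edges of a simple graph. -/
def graphSpan {V : Type*} [Fintype V] [DecidableEq V] (G : SimpleGraph V) :
    Submodule ℂ (Matrix V V ℂ) :=
  Submodule.span ℂ {x | ∃ v w, G.Adj v w ∧ x = Matrix.single v w 1}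

/-- The partial trace over the first tensor factor. -/
def ptrace {I J : Type*} [Fintype I] (P : Matrix (I × J) (I × J) ℂ) : Matrix J J ℂ :=
  Matrix.of fun p q => ∑ i, P (i, p) (i, q)

/-- The complete quantum graph operator space: everything trace-orthogonal to `M'`. -/
def completeS {I : Type*} [Fintype I] (M : Set (Matrix I I ℂ)) :
    Submodule ℂ (Matrix I I ℂ) where
  carrier := {X | ∀ A ∈ commutant M, Matrix.trace (X * Aᴴ) = 0}
  add_mem' := by
    intro x y hx hy A hA
    rw [Set.mem_setOf_eq] at *
    rw [Matrix.add_mul, Matrix.trace_add, hx A hA, hy A hA, add_zero]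
  zero_mem' := by
    intro A hA
    rw [Matrix.zero_mul, Matrix.trace_zero]
  smul_mem' := by
    intro r x hx A hA
    rw [Set.mem_setOf_eq] at *
    rw [Matrix.smul_mul, Matrix.trace_smul, hx A hA, smul_zero]

section QGAux

variable {n m : ℕ}

/-- The commutant of a set of matrices, as a submodule. -/
def commSub {I : Type*} [Fintype I] (M : Set (Matrix I I ℂ)) : Submodule ℂ (Matrix I I ℂ) where
  carrier := commutant M
  add_mem' := fun {x y} hx hy A hA => by rw [add_mul, mul_add, hx A hA, hy A hA]
  zero_mem' := fun A hA => by rw [zero_mul, mul_zero]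
  smul_mem' := fun c x hx A hA => by rw [smul_mul_assoc, mul_smul_comm, hx A hA]

lemma kron_conjT {I J : Type*} [Fintype I] [Fintype J] (v : Matrix I I ℂ) (w : Matrix J J ℂ) :
    (v ⊗ₖ w)ᴴ = vᴴ ⊗ₖ wᴴ := by
  ext ⟨i, j⟩ ⟨i', j'⟩
  simp [Matrix.conjTranspose_apply, Matrix.kroneckerMap_apply]

lemma mul_kron_one_apply (Y : Matrix (Fin n × Fin m) (Fin n × Fin m) ℂ)
    (v : Matrix (Fin n) (Fin n) ℂ) (i i' : Fin n) (j l : Fin m) :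
    (Y * (v ⊗ₖ (1 : Matrix (Fin m) (Fin m) ℂ))) (i, j) (i', l)
      = ∑ p, Y (i, j) (p, l) * v p i' := by
  rw [Matrix.mul_apply, Fintype.sum_prod_type]
  simp [Matrix.kroneckerMap_apply, Matrix.one_apply, mul_ite]

lemma kron_one_mul_apply (Y : Matrix (Fin n × Fin m) (Fin n × Fin m) ℂ)
    (v : Matrix (Fin n) (Fin n) ℂ) (i i' : Fin n) (j l : Fin m) :
    ((v ⊗ₖ (1 : Matrix (Fin m) (Fin m) ℂ)) * Y) (i, j) (i', l)
      = ∑ p, v i p * Y (p, j) (i', l) := by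
  rw [Matrix.mul_apply, Fintype.sum_prod_type]
  simp [Matrix.kroneckerMap_apply, Matrix.one_apply, ite_mul, mul_ite]

lemma mul_one_kron_apply (Y : Matrix (Fin n × Fin m) (Fin n × Fin m) ℂ)
    (w : Matrix (Fin m) (Fin m) ℂ) (i i' : Fin n) (j l : Fin m) :
    (Y * ((1 : Matrix (Fin n) (Fin n) ℂ) ⊗ₖ w)) (i, j) (i', l)
      = ∑ q, Y (i, j) (i', q) * w q l := by
  rw [Matrix.mul_apply, Fintype.sum_prod_type]
  simp [Matrix.kroneckerMap_apply, Matrix.one_apply, ite_mul, mul_ite]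

lemma one_kron_mul_apply (Y : Matrix (Fin n × Fin m) (Fin n × Fin m) ℂ)
    (w : Matrix (Fin m) (Fin m) ℂ) (i i' : Fin n) (j l : Fin m) :
    (((1 : Matrix (Fin n) (Fin n) ℂ) ⊗ₖ w) * Y) (i, j) (i', l)
      = ∑ q, w j q * Y (i, q) (i', l) := by
  rw [Matrix.mul_apply, Fintype.sum_prod_type]
  simp [Matrix.kroneckerMap_apply, Matrix.one_apply, ite_mul, mul_ite]

/-- Key structural lemma: anything commuting with `MG ⊗ 1` and `1 ⊗ MH` lies in the
span of Kronecker products of elements of the respective commutants. -/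
lemma mem_tensorSpan_commutant (MG : Set (Matrix (Fin n) (Fin n) ℂ))
    (MH : Set (Matrix (Fin m) (Fin m) ℂ))
    (Y : Matrix (Fin n × Fin m) (Fin n × Fin m) ℂ)
    (h1 : ∀ v ∈ MG, Y * (v ⊗ₖ (1 : Matrix (Fin m) (Fin m) ℂ))
        = (v ⊗ₖ (1 : Matrix (Fin m) (Fin m) ℂ)) * Y)
    (h2 : ∀ w ∈ MH, Y * ((1 : Matrix (Fin n) (Fin n) ℂ) ⊗ₖ w)
        = ((1 : Matrix (Fin n) (Fin n) ℂ) ⊗ₖ w) * Y) :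
    Y ∈ tensorSpan (commutant MG) (commutant MH) := by
  classical
  have hblock : ∀ j l : Fin m,
      (Matrix.of fun i i' => Y (i, j) (i', l)) ∈ commSub MG := by
    intro j l v hv
    ext i i'
    have h := congrFun (congrFun (h1 v hv) (i, j)) (i', l)
    rw [mul_kron_one_apply, kron_one_mul_apply] at h
    simpa [Matrix.mul_apply] using h
  set d := Module.finrank ℂ (commSub MG) with hd
  let b : Module.Basis (Fin d) ℂ (commSub MG) := Module.finBasis ℂ (commSub MG)
  let f : Fin d → Matrix (Fin n) (Fin n) ℂ := fun k => (b k : Matrix (Fin n) (Fin n) ℂ)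
  let c : Fin d → Fin m → Fin m → ℂ := fun k j l => b.repr ⟨_, hblock j l⟩ k
  let C : Fin d → Matrix (Fin m) (Fin m) ℂ := fun k => Matrix.of fun j l => c k j l
  have hY : ∀ (i i' : Fin n) (j l : Fin m),
      Y (i, j) (i', l) = ∑ k, c k j l * f k i i' := by
    intro i i' j l
    have h0 := b.sum_repr ⟨_, hblock j l⟩
    have h1' := congrArg (fun x : commSub MG => (x : Matrix (Fin n) (Fin n) ℂ) i i') h0
    simp only [Submodule.coe_sum, Submodule.coe_smul, Matrix.sum_apply, Matrix.smul_apply,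
      smul_eq_mul, Matrix.of_apply] at h1'
    simpa [f, c, Matrix.sum_apply, smul_eq_mul] using h1'.symm
  have hli : LinearIndependent ℂ f :=
    b.linearIndependent.map' (commSub MG).subtype (Submodule.ker_subtype _)
  have hC : ∀ k, C k ∈ commutant MH := by
    intro k w hw
    have key : ∀ j l : Fin m,
        ∑ k', ((C k' * w) j l - (w * C k') j l) • f k' = 0 := by
      intro j l
      ext i i'
      have h := congrFun (congrFun (h2 w hw) (i, j)) (i', l)
      rw [mul_one_kron_apply, one_kron_mul_apply] at h
      have hl : ∑ k', (C k' * w) j l * f k' i i' = ∑ q, Y (i, j) (i', q) * w q l :=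
        calc ∑ k', (C k' * w) j l * f k' i i'
            = ∑ k', ∑ q, c k' j q * w q l * f k' i i' := by
              refine Finset.sum_congr rfl fun k' _ => ?_
              rw [Matrix.mul_apply, Finset.sum_mul]
              simp [C]
          _ = ∑ q, ∑ k', c k' j q * w q l * f k' i i' := Finset.sum_comm
          _ = ∑ q, Y (i, j) (i', q) * w q l := by
              refine Finset.sum_congr rfl fun q _ => ?_
              rw [hY, Finset.sum_mul]
              refine Finset.sum_congr rfl fun k' _ => ?_
              ring
      have hr : ∑ k', (w * C k') j l * f k' i i' = ∑ q, w j q * Y (i, q) (i', l) :=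
        calc ∑ k', (w * C k') j l * f k' i i'
            = ∑ k', ∑ q, w j q * c k' q l * f k' i i' := by
              refine Finset.sum_congr rfl fun k' _ => ?_
              rw [Matrix.mul_apply, Finset.sum_mul]
              simp [C]
          _ = ∑ q, ∑ k', w j q * c k' q l * f k' i i' := Finset.sum_comm
          _ = ∑ q, w j q * Y (i, q) (i', l) := by
              refine Finset.sum_congr rfl fun q _ => ?_
              rw [hY, Finset.mul_sum]
              refine Finset.sum_congr rfl fun k' _ => ?_
              ring
      have : ∑ k', ((C k' * w) j l - (w * C k') j l) * f k' i i' = 0 := by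
        simp only [sub_mul, Finset.sum_sub_distrib, hl, hr, h, sub_self]
      simpa [Matrix.sum_apply, smul_eq_mul] using this
    have hzero : ∀ j l : Fin m, ∀ k', (C k' * w) j l - (w * C k') j l = 0 := fun j l =>
      Fintype.linearIndependent_iff.mp hli _ (key j l)
    ext j l
    exact sub_eq_zero.mp (hzero j l k)
  have hdecomp : Y = ∑ k, f k ⊗ₖ C k := by
    ext ⟨i, j⟩ ⟨i', l⟩
    rw [hY i i' j l]
    rw [Matrix.sum_apply]
    refine Finset.sum_congr rfl fun k _ => ?_
    simp [Matrix.kroneckerMap_apply, C, mul_comm]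
  rw [hdecomp]
  exact Submodule.sum_mem _ fun k _ =>
    Submodule.subset_span ⟨f k, (b k).2, C k, hC k, rfl⟩

lemma bimodule_aux {I J : Type*} [Fintype I] [Fintype J]
    (SG CG : Set (Matrix I I ℂ)) (SH CH : Set (Matrix J J ℂ))
    (hGbim : ∀ f ∈ CG, ∀ f' ∈ CG, ∀ v ∈ SG, f * v * f' ∈ SG)
    (hHbim : ∀ g ∈ CH, ∀ g' ∈ CH, ∀ w ∈ SH, g * w * g' ∈ SH) :
    ∀ A ∈ tensorSpan CG CH, ∀ B ∈ tensorSpan CG CH, ∀ X ∈ tensorSpan SG SH,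
      A * X * B ∈ tensorSpan SG SH := by
  have step1 : ∀ f ∈ CG, ∀ g ∈ CH, ∀ f' ∈ CG, ∀ g' ∈ CH, ∀ X ∈ tensorSpan SG SH,
      (f ⊗ₖ g) * X * (f' ⊗ₖ g') ∈ tensorSpan SG SH := by
    intro f hf g hg f' hf' g' hg' X hX
    induction hX using Submodule.span_induction with
    | mem x hx =>
      obtain ⟨v, hv, w, hw, rfl⟩ := hx
      rw [← Matrix.mul_kronecker_mul, ← Matrix.mul_kronecker_mul]
      exact Submodule.subset_span
        ⟨f * v * f', hGbim f hf f' hf' v hv, g * w * g', hHbim g hg g' hg' w hw, rfl⟩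
    | zero => simp
    | add x y _ _ hx hy =>
      rw [mul_add, add_mul]; exact Submodule.add_mem _ hx hy
    | smul a x _ hx =>
      rw [mul_smul_comm, smul_mul_assoc]; exact Submodule.smul_mem _ _ hx
  have step2 : ∀ f ∈ CG, ∀ g ∈ CH, ∀ B ∈ tensorSpan CG CH, ∀ X ∈ tensorSpan SG SH,
      (f ⊗ₖ g) * X * B ∈ tensorSpan SG SH := by
    intro f hf g hg B hB
    induction hB using Submodule.span_induction with
    | mem x hx =>
      obtain ⟨f', hf', g', hg', rfl⟩ := hx
      exact step1 f hf g hg f' hf' g' hg'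
    | zero => intro X _; simp
    | add x y _ _ hx hy =>
      intro X hX; rw [mul_add]; exact Submodule.add_mem _ (hx X hX) (hy X hX)
    | smul a x _ hx =>
      intro X hX; rw [mul_smul_comm]; exact Submodule.smul_mem _ _ (hx X hX)
  intro A hA
  induction hA using Submodule.span_induction with
  | mem x hx =>
    obtain ⟨f, hf, g, hg, rfl⟩ := hx
    exact step2 f hf g hg
  | zero => intro B _ X _; simp
  | add x y _ _ hx hy =>
    intro B hB X hX
    rw [add_mul, add_mul]; exact Submodule.add_mem _ (hx B hB X hX) (hy B hB X hX)
  | smul a x _ hx =>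
    intro B hB X hX
    rw [smul_mul_assoc, smul_mul_assoc]; exact Submodule.smul_mem _ _ (hx B hB X hX)

lemma trace_aux {I J : Type*} [Fintype I] [Fintype J]
    (SG CG : Set (Matrix I I ℂ)) (SH CH : Set (Matrix J J ℂ))
    (hGtr : ∀ v ∈ SG, ∀ f ∈ CG, Matrix.trace (v * fᴴ) = 0) :
    ∀ X ∈ tensorSpan SG SH, ∀ A ∈ tensorSpan CG CH, Matrix.trace (X * Aᴴ) = 0 := by
  have step1 : ∀ v ∈ SG, ∀ w ∈ SH, ∀ A ∈ tensorSpan CG CH,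
      Matrix.trace ((v ⊗ₖ w) * Aᴴ) = 0 := by
    intro v hv w hw A hA
    induction hA using Submodule.span_induction with
    | mem x hx =>
      obtain ⟨f, hf, g, hg, rfl⟩ := hx
      rw [kron_conjT, ← Matrix.mul_kronecker_mul, Matrix.trace_kronecker,
        hGtr v hv f hf, zero_mul]
    | zero => simp
    | add x y _ _ hx hy =>
      rw [Matrix.conjTranspose_add, mul_add, Matrix.trace_add, hx, hy, add_zero]
    | smul a x _ hx =>
      rw [Matrix.conjTranspose_smul, mul_smul_comm, Matrix.trace_smul, hx, smul_zero]
  intro X hX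
  induction hX using Submodule.span_induction with
  | mem x hx =>
    obtain ⟨v, hv, w, hw, rfl⟩ := hx
    exact step1 v hv w hw
  | zero => intro A _; simp
  | add x y _ _ hx hy =>
    intro A hA
    rw [add_mul, Matrix.trace_add, hx A hA, hy A hA, add_zero]
  | smul a x _ hx =>
    intro A hA
    rw [smul_mul_assoc, Matrix.trace_smul, hx A hA, smul_zero]

end QGAux

theorem categoricalProduct_isQuantumGraph {n m : ℕ}
    (SG : Submodule ℂ (Matrix (Fin n) (Fin n) ℂ))
    (MG : StarSubalgebra ℂ (Matrix (Fin n) (Fin n) ℂ))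
    (SH : Submodule ℂ (Matrix (Fin m) (Fin m) ℂ))
    (MH : StarSubalgebra ℂ (Matrix (Fin m) (Fin m) ℂ))
    (hG : IsQuantumGraph SG (MG : Set (Matrix (Fin n) (Fin n) ℂ)))
    (hH : IsQuantumGraph SH (MH : Set (Matrix (Fin m) (Fin m) ℂ))) :
    IsQuantumGraph (tensorSpan (SG : Set (Matrix (Fin n) (Fin n) ℂ)) (SH : Set (Matrix (Fin m) (Fin m) ℂ))) ((tensorSpan (MG : Set (Matrix (Fin n) (Fin n) ℂ)) (MH : Set (Matrix (Fin m) (Fin m) ℂ)) : Submodule ℂ (Matrix (Fin n × Fin m) (Fin n × Fin m) ℂ)) : Set (Matrix (Fin n × Fin m) (Fin n × Fin m) ℂ)) := by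
  have hcomm : ∀ A ∈ commutant
      ((tensorSpan (MG : Set (Matrix (Fin n) (Fin n) ℂ))
        (MH : Set (Matrix (Fin m) (Fin m) ℂ)) :
          Submodule ℂ (Matrix (Fin n × Fin m) (Fin n × Fin m) ℂ)) :
            Set (Matrix (Fin n × Fin m) (Fin n × Fin m) ℂ)),
      A ∈ tensorSpan (commutant (MG : Set (Matrix (Fin n) (Fin n) ℂ)))
        (commutant (MH : Set (Matrix (Fin m) (Fin m) ℂ))) := by
    intro A hA
    apply mem_tensorSpan_commutant
    · intro v hv
      exact hA _ (Submodule.subset_span ⟨v, hv, 1, MH.one_mem, rfl⟩)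
    · intro w hw
      exact hA _ (Submodule.subset_span ⟨1, MG.one_mem, w, hw, rfl⟩)
  refine ⟨?_, ?_, ?_⟩
  · intro X hX
    induction hX using Submodule.span_induction with
    | mem x hx =>
      obtain ⟨v, hv, w, hw, rfl⟩ := hx
      rw [kron_conjT]
      exact Submodule.subset_span ⟨vᴴ, hG.1 v hv, wᴴ, hH.1 w hw, rfl⟩
    | zero => simp
    | add x y _ _ hx hy =>
      rw [Matrix.conjTranspose_add]; exact Submodule.add_mem _ hx hy
    | smul a x _ hx =>
      rw [Matrix.conjTranspose_smul]; exact Submodule.smul_mem _ _ hx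
  · intro A hA B hB X hX
    exact bimodule_aux _ _ _ _
      (fun f hf f' hf' v hv => hG.2.1 f hf f' hf' v hv)
      (fun g hg g' hg' w hw => hH.2.1 g hg g' hg' w hw)
      A (hcomm A hA) B (hcomm B hB) X hX
  · intro X hX A hA
    exact trace_aux _ _ _ _
      (fun v hv f hf => hG.2.2 v hv f hf)
      X hX A (hcomm A hA)

end
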